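/- The modal logic KB enjoys ULIP; moreover, for every formula φ and all finite sets P, Q of propositional variables there exists a uniform Lyndon interpolant θ of (φ,P,Q) in KB with d(θ) ≤ d(φ). -/

import Mathlib

/-- Modal formulas: propositional variables, ⊥, →, □. -/
inductive Formula : Type
  | var : ℕ → Formula
  | bot : Formula
  | imp : Formula → Formula → Formula
  | box : Formula → Formula
  deriving DecidableEq

namespace Formula

def neg (φ : Formula) : Formula := φ.imp bot

def top : Formula := neg bot

def and (φ ψ : Formula) : Formula := (φ.imp ψ.neg).neg

def iff (φ ψ : Formula) : Formula := (φ.imp ψ).and (ψ.imp φ)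

def dia (φ : Formula) : Formula := φ.neg.box.neg

/-- Variables occurring positively (`true`) / negatively (`false`). -/
def vsgn : Formula → Bool → Finset ℕ
  | var p, true => {p}
  | var _, false => ∅
  | bot, _ => ∅
  | imp φ ψ, b => vsgn φ (!b) ∪ vsgn ψ b
  | box φ, b => vsgn φ b

def vpos (φ : Formula) : Finset ℕ := vsgn φ true
def vneg (φ : Formula) : Finset ℕ := vsgn φ false
def vars (φ : Formula) : Finset ℕ := vpos φ ∪ vneg φ

/-- Modal depth. -/
def depth : Formula → ℕ
  | var _ => 0
  | bot => 0
  | imp φ ψ => max (depth φ) (depth ψ)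
  | box φ => depth φ + 1

/-- Uniform substitution. -/
def subst (σ : ℕ → Formula) : Formula → Formula
  | var p => σ p
  | bot => bot
  | imp φ ψ => (subst σ φ).imp (subst σ ψ)
  | box φ => (subst σ φ).box

/-- The set of subformulas. -/
def subfmls : Formula → Finset Formula
  | var p => {var p}
  | bot => {bot}
  | imp φ ψ => insert (imp φ ψ) (subfmls φ ∪ subfmls ψ)
  | box φ => insert (box φ) (subfmls φ)

/-- n(φ) = |{ψ : □ψ ∈ Sub(φ)}|. -/
def boxCount (φ : Formula) : ℕ :=
  ((subfmls φ).filter fun ψ => box ψ ∈ subfmls φ).card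

/-- The translation ⋆ : p⋆ = p, ⊥⋆ = ⊥, (φ→ψ)⋆ = φ⋆→ψ⋆, (□φ)⋆ = φ⋆ ∧ □φ⋆. -/
def star : Formula → Formula
  | var p => var p
  | bot => bot
  | imp φ ψ => (star φ).imp (star ψ)
  | box φ => (star φ).and (star φ).box

end Formula

/-- Propositional tautology: true under every valuation treating variables and
boxed formulas as atoms. -/
def Tautology (φ : Formula) : Prop :=
  ∀ v : Formula → Bool, v .bot = false →
    (∀ ψ θ : Formula, v (ψ.imp θ) = (!v ψ || v θ)) → v φ = true

/-- A normal modal logic: contains all tautologies and □(p→q)→(□p→□q), and is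
closed under modus ponens, necessitation and uniform substitution. -/
structure IsNormal (L : Set Formula) : Prop where
  taut : ∀ φ, Tautology φ → φ ∈ L
  axK : ((Formula.var 0).imp (Formula.var 1)).box.imp
      ((Formula.var 0).box.imp (Formula.var 1).box) ∈ L
  mp : ∀ φ ψ : Formula, φ.imp ψ ∈ L → φ ∈ L → ψ ∈ L
  nec : ∀ φ : Formula, φ ∈ L → φ.box ∈ L
  subst_mem : ∀ φ ∈ L, ∀ σ : ℕ → Formula, Formula.subst σ φ ∈ L

/-- The least normal modal logic including `X`. -/
def NormalExt (X : Set Formula) : Set Formula :=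
  ⋂₀ {L : Set Formula | IsNormal L ∧ X ⊆ L}

/-- The least normal modal logic K. -/
def TheoryK : Set Formula := NormalExt ∅

def axT : Formula := (Formula.var 0).box.imp (Formula.var 0)
def ax4 : Formula := (Formula.var 0).box.imp (Formula.var 0).box.box
def axB : Formula := (Formula.var 0).imp (Formula.var 0).dia.box
def axD : Formula := Formula.bot.box.neg
def axGL : Formula := ((Formula.var 0).box.imp (Formula.var 0)).box.imp (Formula.var 0).box
def axGrz : Formula :=
  (((Formula.var 0).imp (Formula.var 0).box).box.imp (Formula.var 0)).box.imp (Formula.var 0)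

def TheoryKD : Set Formula := NormalExt {axD}
def TheoryKT : Set Formula := NormalExt {axT}
def TheoryKB : Set Formula := NormalExt {axB}
def TheoryKDB : Set Formula := NormalExt {axD, axB}
def TheoryKTB : Set Formula := NormalExt {axT, axB}
def TheoryK4 : Set Formula := NormalExt {ax4}
def TheoryS4 : Set Formula := NormalExt {axT, ax4}
def TheoryGL : Set Formula := NormalExt {axGL}
def TheoryGrz : Set Formula := NormalExt {axGrz}

/-- L⋆ := {φ : L ⊢ φ⋆}. -/
def starLogic (L : Set Formula) : Set Formula := {φ | Formula.star φ ∈ L}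

/-- θ is a uniform Lyndon interpolant of (φ, P, Q) in L. -/
def IsULInterpolant (L : Set Formula) (φ : Formula) (P Q : Finset ℕ) (θ : Formula) : Prop :=
  θ.vpos ⊆ φ.vpos \ P ∧ θ.vneg ⊆ φ.vneg \ Q ∧ φ.imp θ ∈ L ∧
    ∀ ψ : Formula, ψ.vpos ∩ P = ∅ → ψ.vneg ∩ Q = ∅ → φ.imp ψ ∈ L → θ.imp ψ ∈ L

/-- The uniform Lyndon interpolation property. -/
def ULIP (L : Set Formula) : Prop :=
  ∀ (φ : Formula) (P Q : Finset ℕ), ∃ θ : Formula, IsULInterpolant L φ P Q θ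

/-- The uniform interpolation property. -/
def UIP (L : Set Formula) : Prop :=
  ∀ (φ : Formula) (P : Finset ℕ), ∃ θ : Formula,
    θ.vars ⊆ φ.vars \ P ∧ φ.imp θ ∈ L ∧
      ∀ ψ : Formula, ψ.vars ∩ P = ∅ → φ.imp ψ ∈ L → θ.imp ψ ∈ L

/-- The Lyndon interpolation property. -/
def LIP (L : Set Formula) : Prop :=
  ∀ φ ψ : Formula, φ.imp ψ ∈ L → ∃ θ : Formula,
    θ.vpos ⊆ φ.vpos ∩ ψ.vpos ∧ θ.vneg ⊆ φ.vneg ∩ ψ.vneg ∧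
      φ.imp θ ∈ L ∧ θ.imp ψ ∈ L

/-- A Kripke model. -/
structure KripkeModel where
  W : Type
  nonempty : Nonempty W
  rel : W → W → Prop
  val : W → ℕ → Prop

/-- Satisfaction in a Kripke model. -/
def KripkeModel.Sat (M : KripkeModel) : Formula → M.W → Prop
  | .var p, w => M.val w p
  | .bot, _ => False
  | .imp φ ψ, w => M.Sat φ w → M.Sat ψ w
  | .box φ, w => ∀ x, M.rel w x → M.Sat φ x

/-- A (P,Q)-formula: v⁺(φ) ⊆ P and v⁻(φ) ⊆ Q. -/
def PQFormula (P Q : Finset ℕ) (φ : Formula) : Prop := φ.vpos ⊆ P ∧ φ.vneg ⊆ Q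

/-- `F n P Q` is a finite list of (P,Q)-formulas of modal depth ≤ n such that every
(P,Q)-formula of modal depth ≤ n is K-provably equivalent to some member. -/
def IsFamily (F : ℕ → Finset ℕ → Finset ℕ → List Formula) : Prop :=
  ∀ (n : ℕ) (P Q : Finset ℕ),
    (∀ φ ∈ F n P Q, PQFormula P Q φ ∧ φ.depth ≤ n) ∧
    ∀ ψ : Formula, PQFormula P Q ψ → ψ.depth ≤ n →
      ∃ φ ∈ F n P Q, Formula.iff φ ψ ∈ TheoryK

/-- Th_n^{(P,Q)}(w) = {φ ∈ F_n^{(P,Q)} : w ⊩ φ}. -/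
def Th (F : ℕ → Finset ℕ → Finset ℕ → List Formula) (M : KripkeModel)
    (n : ℕ) (P Q : Finset ℕ) (w : M.W) : Set Formula :=
  {φ | φ ∈ F n P Q ∧ M.Sat φ w}

def conjList : List Formula → Formula
  | [] => Formula.top
  | φ :: l => φ.and (conjList l)

open Classical in
/-- C_n^{(P,Q)}(w) = ⋀ Th_n^{(P,Q)}(w). -/
noncomputable def Cfml (F : ℕ → Finset ℕ → Finset ℕ → List Formula) (M : KripkeModel)
    (n : ℕ) (P Q : Finset ℕ) (w : M.W) : Formula :=
  conjList ((F n P Q).filter fun φ => decide (M.Sat φ w))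

/-- Layered (P,Q)-bisimulation between M and M'. -/
def LayeredBisim (P Q : Finset ℕ) (M M' : KripkeModel)
    (Z : M.W → ℕ → M'.W → Prop) : Prop :=
  (∀ w n w', Z w n w' →
    (∀ p ∈ P, M.val w p → M'.val w' p) ∧ (∀ q ∈ Q, ¬M.val w q → ¬M'.val w' q)) ∧
  (∀ w n w', Z w (n + 1) w' → ∀ x, M.rel w x → ∃ x', M'.rel w' x' ∧ Z x n x') ∧
  (∀ w n w', Z w (n + 1) w' → ∀ x', M'.rel w' x' → ∃ x, M.rel w x ∧ Z x n x')

/-- Downward closedness of a layered bisimulation. -/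
def DownClosed (M M' : KripkeModel) (Z : M.W → ℕ → M'.W → Prop) : Prop :=
  ∀ w n w', Z w n w' → ∀ m ≤ n, Z w m w'

/-- A class of Kripke models has ULIP. -/
def ClassULIP (F : ℕ → Finset ℕ → Finset ℕ → List Formula) (Cl : Set KripkeModel) : Prop :=
  ∀ P1 P2 P3 Q1 Q2 Q3 : Finset ℕ,
    Disjoint P1 P2 → Disjoint P1 P3 → Disjoint P2 P3 →
    Disjoint Q1 Q2 → Disjoint Q1 Q3 → Disjoint Q2 Q3 →
    ∀ M : KripkeModel, M ∈ Cl → ∀ M' : KripkeModel, M' ∈ Cl →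
    ∀ w : M.W, ∀ w' : M'.W, ∀ m n : ℕ,
      Th F M n P2 Q2 w ⊆ Th F M' n P2 Q2 w' →
      ∃ Mst : KripkeModel, Mst ∈ Cl ∧ ∃ wst : Mst.W,
        Th F M n (P1 ∪ P2) (Q1 ∪ Q2) w ⊆ Th F Mst n (P1 ∪ P2) (Q1 ∪ Q2) wst ∧
        Th F Mst m (P2 ∪ P3) (Q2 ∪ Q3) wst ⊆ Th F M' m (P2 ∪ P3) (Q2 ∪ Q3) w'

section ULKBdev
open Formula

/-- symmetric model -/
def Symm (M : KripkeModel) : Prop := ∀ a b, M.rel a b → M.rel b a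

def orf (a b : Formula) : Formula := a.neg.imp b

def disjList : List Formula → Formula
  | [] => Formula.bot
  | φ :: l => orf φ (disjList l)

inductive Prov : Formula → Prop
  | taut {φ} : Tautology φ → Prov φ
  | axK (φ ψ : Formula) : Prov (((φ.imp ψ).box).imp (φ.box.imp ψ.box))
  | axB (φ : Formula) : Prov (φ.imp φ.dia.box)
  | mp {φ ψ} : Prov (φ.imp ψ) → Prov φ → Prov ψ
  | nec {φ} : Prov φ → Prov φ.box

lemma Tautology.subst {φ : Formula} (h : Tautology φ) (σ : ℕ → Formula) :
    Tautology (φ.subst σ) := by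
  intro v hb hi
  exact h (fun χ => v (χ.subst σ)) hb (fun ψ θ => hi (ψ.subst σ) (θ.subst σ))

lemma Prov.subst {φ : Formula} (h : Prov φ) (σ : ℕ → Formula) : Prov (φ.subst σ) := by
  induction h generalizing σ with
  | taut h => exact Prov.taut (h.subst σ)
  | axK φ ψ => exact Prov.axK (φ.subst σ) (ψ.subst σ)
  | axB φ => exact Prov.axB (φ.subst σ)
  | mp h1 h2 ih1 ih2 => exact Prov.mp (ih1 σ) (ih2 σ)
  | nec h ih => exact Prov.nec (ih σ)

lemma isNormal_prov : IsNormal {φ | Prov φ} := by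
  refine ⟨fun φ h => Prov.taut h, Prov.axK (var 0) (var 1), ?_, ?_, ?_⟩
  · exact fun φ ψ h1 h2 => Prov.mp h1 h2
  · exact fun φ h => Prov.nec h
  · exact fun φ h σ => h.subst σ

lemma prov_mem_KB {φ : Formula} (h : Prov φ) : φ ∈ TheoryKB := by
  intro L hL
  obtain ⟨hN, hX⟩ := hL
  induction h with
  | @taut φ h => exact hN.taut φ h
  | axK φ ψ =>
      have h0 := hN.subst_mem _ hN.axK (fun n => if n = 0 then φ else ψ)
      simpa [Formula.subst] using h0
  | axB φ =>
      have h0 := hN.subst_mem _ (hX rfl) (fun _ => φ)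
      simpa [axB, Formula.subst, Formula.dia, Formula.neg] using h0
  | mp h1 h2 ih1 ih2 => exact hN.mp _ _ ih1 ih2
  | nec h ih => exact hN.nec _ ih

lemma KB_eq_prov : TheoryKB = {φ | Prov φ} := by
  apply subset_antisymm
  · intro φ hφ
    exact hφ _ ⟨isNormal_prov, by intro x hx; simp at hx; subst hx; exact Prov.axB (var 0)⟩
  · intro φ h
    exact prov_mem_KB h

@[simp] lemma sat_bot {M : KripkeModel} {w : M.W} : M.Sat Formula.bot w ↔ False := Iff.rfl
@[simp] lemma sat_imp {M : KripkeModel} {w : M.W} {φ ψ : Formula} :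
    M.Sat (φ.imp ψ) w ↔ (M.Sat φ w → M.Sat ψ w) := Iff.rfl
@[simp] lemma sat_box {M : KripkeModel} {w : M.W} {φ : Formula} :
    M.Sat φ.box w ↔ ∀ x, M.rel w x → M.Sat φ x := Iff.rfl
@[simp] lemma sat_var {M : KripkeModel} {w : M.W} {p : ℕ} :
    M.Sat (Formula.var p) w ↔ M.val w p := Iff.rfl
@[simp] lemma sat_neg {M : KripkeModel} {w : M.W} {φ : Formula} :
    M.Sat φ.neg w ↔ ¬ M.Sat φ w := Iff.rfl
@[simp] lemma sat_top {M : KripkeModel} {w : M.W} : M.Sat Formula.top w ↔ True := by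
  simp [Formula.top]
@[simp] lemma sat_and {M : KripkeModel} {w : M.W} {φ ψ : Formula} :
    M.Sat (φ.and ψ) w ↔ (M.Sat φ w ∧ M.Sat ψ w) := by
  simp [Formula.and]
@[simp] lemma sat_orf {M : KripkeModel} {w : M.W} {φ ψ : Formula} :
    M.Sat (orf φ ψ) w ↔ (M.Sat φ w ∨ M.Sat ψ w) := by
  simp only [orf, sat_imp, sat_neg]; tauto
@[simp] lemma sat_dia {M : KripkeModel} {w : M.W} {φ : Formula} :
    M.Sat φ.dia w ↔ ∃ x, M.rel w x ∧ M.Sat φ x := by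
  simp only [Formula.dia, sat_neg, sat_box]; push_neg; simp

lemma sat_conjList {M : KripkeModel} {w : M.W} {l : List Formula} :
    M.Sat (conjList l) w ↔ ∀ χ ∈ l, M.Sat χ w := by
  induction l with
  | nil => simp [conjList]
  | cons a l ih => simp [conjList, ih]

lemma sat_disjList {M : KripkeModel} {w : M.W} {l : List Formula} :
    M.Sat (disjList l) w ↔ ∃ χ ∈ l, M.Sat χ w := by
  induction l with
  | nil => simp [disjList]
  | cons a l ih => simp [disjList, ih]

lemma taut_sat {M : KripkeModel} {w : M.W} {φ : Formula} (h : Tautology φ) : M.Sat φ w := by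
  classical
  set v : Formula → Bool := fun χ => if M.Sat χ w then true else false with hv
  have h1 : v Formula.bot = false := by simp [hv]
  have h2 : ∀ ψ θ : Formula, v (ψ.imp θ) = (!v ψ || v θ) := by
    intro ψ θ
    by_cases hψ : M.Sat ψ w <;> by_cases hθ : M.Sat θ w <;> simp [hv, hψ, hθ]
  have := h v h1 h2
  by_contra hc
  simp [hv, hc] at this

lemma sound {φ : Formula} (h : Prov φ) : ∀ M : KripkeModel, Symm M → ∀ w, M.Sat φ w := by
  induction h with
  | taut h => exact fun M _ w => taut_sat h
  | axK φ ψ => intro M _ w; intro h1 h2 x hx; exact h1 x hx (h2 x hx)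
  | axB φ =>
      intro M hs w hw x hx
      rw [sat_dia]
      exact ⟨w, hs _ _ hx, hw⟩
  | mp h1 h2 ih1 ih2 => exact fun M hs w => ih1 M hs w (ih2 M hs w)
  | nec h ih => exact fun M hs w x hx => ih M hs x

def triv : KripkeModel := ⟨PUnit, ⟨⟨⟩⟩, fun _ _ => True, fun _ _ => True⟩

lemma triv_symm : Symm triv := fun _ _ _ => trivial

lemma not_prov_bot : ¬ Prov Formula.bot := fun h => sound h triv triv_symm ⟨⟩

end ULKBdev
section ULKBdev2
open Formula

-- Propositional kit

lemma prov_imp_of {a b : Formula} (h : Prov b) : Prov (a.imp b) := by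
  refine Prov.mp (Prov.taut ?_) h
  intro v hb hi
  simp only [hi, hb]
  cases v a <;> cases v b <;> rfl

lemma prov_top : Prov Formula.top := by
  apply Prov.taut
  intro v hb hi
  simp only [Formula.top, Formula.neg, hi, hb]
  rfl

lemma prov_trans {a b c : Formula} (h1 : Prov (a.imp b)) (h2 : Prov (b.imp c)) :
    Prov (a.imp c) := by
  have t : Prov ((a.imp b).imp ((b.imp c).imp (a.imp c))) := by
    apply Prov.taut; intro v hb hi; simp only [hi, hb]
    cases v a <;> cases v b <;> cases v c <;> rfl
  exact (t.mp h1).mp h2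

lemma prov_imp_mp {c x y : Formula} (h1 : Prov (c.imp (x.imp y))) (h2 : Prov (c.imp x)) :
    Prov (c.imp y) := by
  have t : Prov ((c.imp (x.imp y)).imp ((c.imp x).imp (c.imp y))) := by
    apply Prov.taut; intro v hb hi; simp only [hi, hb]
    cases v c <;> cases v x <;> cases v y <;> rfl
  exact (t.mp h1).mp h2

lemma prov_imp_conj {f a c : Formula} (h1 : Prov (f.imp a)) (h2 : Prov (f.imp c)) :
    Prov (f.imp (a.and c)) := by
  have t : Prov ((f.imp a).imp ((f.imp c).imp (f.imp (a.and c)))) := by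
    apply Prov.taut; intro v hb hi; simp only [Formula.and, Formula.neg, hi, hb]
    cases v f <;> cases v a <;> cases v c <;> rfl
  exact (t.mp h1).mp h2

lemma prov_conj_intro {f : Formula} {l : List Formula} (h : ∀ ρ ∈ l, Prov (f.imp ρ)) :
    Prov (f.imp (conjList l)) := by
  induction l with
  | nil => exact prov_imp_of prov_top
  | cons a l ih =>
      exact prov_imp_conj (h a (by simp)) (ih (fun ρ hρ => h ρ (by simp [hρ])))

lemma prov_conj_elim {χ : Formula} {l : List Formula} (h : χ ∈ l) :
    Prov ((conjList l).imp χ) := by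
  induction l with
  | nil => simp at h
  | cons a l ih =>
      rcases List.mem_cons.1 h with h | h
      · subst h
        apply Prov.taut; intro v hb hi
        simp only [conjList, Formula.and, Formula.neg, hi, hb]
        cases v χ <;> cases v (conjList l) <;> rfl
      · have t : Prov (((conjList l).imp χ).imp ((conjList (a :: l)).imp χ)) := by
          apply Prov.taut; intro v hb hi
          simp only [conjList, Formula.and, Formula.neg, hi, hb]
          cases v a <;> cases v χ <;> cases v (conjList l) <;> rfl
        exact t.mp (ih h)

lemma prov_conj_mono {l1 l2 : List Formula} (h : ∀ χ ∈ l1, χ ∈ l2) :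
    Prov ((conjList l2).imp (conjList l1)) :=
  prov_conj_intro (fun ρ hρ => prov_conj_elim (h ρ hρ))

lemma prov_neg_case {φ : Formula} {l : List Formula}
    (h : Prov ((conjList (φ :: l)).imp Formula.bot)) :
    Prov ((conjList l).imp φ.neg) := by
  have t : Prov (((conjList (φ :: l)).imp Formula.bot).imp ((conjList l).imp φ.neg)) := by
    apply Prov.taut; intro v hb hi
    simp only [conjList, Formula.and, Formula.neg, hi, hb]
    cases v φ <;> cases v (conjList l) <;> rfl
  exact t.mp h

lemma prov_box_imp {a b : Formula} (h : Prov (a.imp b)) : Prov (a.box.imp b.box) :=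
  (Prov.axK a b).mp h.nec

lemma prov_box_conj {l : List Formula} :
    Prov ((conjList (l.map Formula.box)).imp (conjList l).box) := by
  induction l with
  | nil => exact prov_imp_of (Prov.nec prov_top)
  | cons a l ih =>
      -- goal: (□a ∧ conj (map box l)) → □(a ∧ conj l)
      have h1 : Prov (a.imp ((conjList l).imp (a.and (conjList l)))) := by
        apply Prov.taut; intro v hb hi
        simp only [Formula.and, Formula.neg, hi, hb]
        cases v a <;> cases v (conjList l) <;> rfl
      have h2 := prov_box_imp h1
      have h3 := Prov.axK (conjList l) (a.and (conjList l))
      -- h2 : □a → □(L → a∧L), h3 : □(L→a∧L) → (□L → □(a∧L)), ih : C → □L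
      -- goal : (□a ∧ C) → □(a∧L)
      set A := Formula.box a
      set X := Formula.box ((conjList l).imp (a.and (conjList l)))
      set Y := Formula.box (a.and (conjList l))
      set B := Formula.box (conjList l)
      set C := conjList (l.map Formula.box)
      have t : Prov ((A.imp X).imp ((X.imp (B.imp Y)).imp ((C.imp B).imp ((A.and C).imp Y)))) := by
        apply Prov.taut; intro v hb hi
        simp only [Formula.and, Formula.neg, hi, hb]
        cases v A <;> cases v X <;> cases v Y <;> cases v B <;> cases v C <;> rfl
      exact ((t.mp h2).mp h3).mp ih

-- Consistent and maximal consistent sets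

def ConS (Γ : Set Formula) : Prop :=
  ∀ l : List Formula, (∀ χ ∈ l, χ ∈ Γ) → ¬ Prov ((conjList l).imp Formula.bot)

def MCS (Γ : Set Formula) : Prop := ConS Γ ∧ ∀ φ : Formula, φ ∈ Γ ∨ φ.neg ∈ Γ

lemma mcs_closed {Γ : Set Formula} (h : MCS Γ) {ψ : Formula} (l : List Formula)
    (hl : ∀ χ ∈ l, χ ∈ Γ) (hp : Prov ((conjList l).imp ψ)) : ψ ∈ Γ := by
  rcases h.2 ψ with hm | hm
  · exact hm
  exfalso
  refine h.1 (ψ.neg :: l) ?_ ?_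
  · intro χ hχ; rcases List.mem_cons.1 hχ with h' | h'
    · subst h'; exact hm
    · exact hl χ h'
  · have t : Prov (((conjList l).imp ψ).imp ((conjList (ψ.neg :: l)).imp Formula.bot)) := by
      apply Prov.taut; intro v hb hi
      simp only [conjList, Formula.and, Formula.neg, hi, hb]
      cases v ψ <;> cases v (conjList l) <;> rfl
    exact t.mp hp

lemma mcs_mem_of_prov {Γ : Set Formula} (h : MCS Γ) {ψ : Formula} (hp : Prov ψ) : ψ ∈ Γ :=
  mcs_closed h [] (by simp) (prov_imp_of hp)

lemma mcs_not_both {Γ : Set Formula} (h : MCS Γ) {φ : Formula}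
    (h1 : φ ∈ Γ) (h2 : φ.neg ∈ Γ) : False := by
  refine h.1 [φ, φ.neg] ?_ ?_
  · intro χ hχ; simp only [List.mem_cons, List.not_mem_nil, or_false] at hχ; rcases hχ with rfl | rfl <;> assumption
  · apply Prov.taut; intro v hb hi
    simp only [conjList, Formula.and, Formula.neg, Formula.top, hi, hb]
    cases v φ <;> rfl

lemma mcs_neg_iff {Γ : Set Formula} (h : MCS Γ) {φ : Formula} :
    φ.neg ∈ Γ ↔ φ ∉ Γ := by
  constructor
  · intro h2 h1; exact mcs_not_both h h1 h2
  · intro h1; rcases h.2 φ with h' | h'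
    · exact absurd h' h1
    · exact h'

lemma mcs_mp {Γ : Set Formula} (h : MCS Γ) {φ ψ : Formula}
    (h1 : φ.imp ψ ∈ Γ) (h2 : φ ∈ Γ) : ψ ∈ Γ := by
  refine mcs_closed h [φ.imp ψ, φ] ?_ ?_
  · intro χ hχ; simp only [List.mem_cons, List.not_mem_nil, or_false] at hχ; rcases hχ with rfl | rfl <;> assumption
  · apply Prov.taut; intro v hb hi
    simp only [conjList, Formula.and, Formula.neg, Formula.top, hi, hb]
    cases v φ <;> cases v ψ <;> rfl

lemma mcs_imp_iff {Γ : Set Formula} (h : MCS Γ) {φ ψ : Formula} :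
    φ.imp ψ ∈ Γ ↔ (φ ∈ Γ → ψ ∈ Γ) := by
  constructor
  · exact fun h1 h2 => mcs_mp h h1 h2
  · intro h1
    rcases h.2 φ with h' | h'
    · refine mcs_closed h [ψ] (by simpa using h1 h') ?_
      apply Prov.taut; intro v hb hi
      simp only [conjList, Formula.and, Formula.neg, Formula.top, hi, hb]
      cases v φ <;> cases v ψ <;> rfl
    · refine mcs_closed h [φ.neg] (by simpa using h') ?_
      apply Prov.taut; intro v hb hi
      simp only [conjList, Formula.and, Formula.neg, Formula.top, hi, hb]
      cases v φ <;> cases v ψ <;> rfl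

lemma con_extract {Γ : Set Formula} {φ : Formula} (hcon : ¬ ConS (Γ ∪ {φ})) :
    ∃ l : List Formula, (∀ χ ∈ l, χ ∈ Γ) ∧ Prov ((conjList l).imp φ.neg) := by
  classical
  simp only [ConS, not_forall, not_not] at hcon
  obtain ⟨l, hl, hp⟩ := hcon
  refine ⟨l.filter (fun χ => χ != φ), ?_, ?_⟩
  · intro χ hχ
    have h1 := List.of_mem_filter hχ
    have h2 := List.mem_of_mem_filter hχ
    rcases hl χ h2 with h | h
    · exact h
    · simp_all
  · have hmono : Prov ((conjList (φ :: l.filter (fun χ => χ != φ))).imp (conjList l)) := by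
      apply prov_conj_mono
      intro χ hχ
      by_cases hc : χ = φ
      · subst hc; simp
      · simp only [List.mem_cons]
        right
        exact List.mem_filter.2 ⟨hχ, by simpa using hc⟩
    exact prov_neg_case (prov_trans hmono hp)

lemma con_union_chain {c : Set (Set Formula)} (hc : IsChain (· ⊆ ·) c)
    (hcon : ∀ Γ ∈ c, ConS Γ) (hne : c.Nonempty) : ConS (⋃₀ c) := by
  intro l hl
  -- find a member of the chain containing all of l
  have : ∃ Γ ∈ c, ∀ χ ∈ l, χ ∈ Γ := by
    induction l with
    | nil => obtain ⟨Γ, hΓ⟩ := hne; exact ⟨Γ, hΓ, by simp⟩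
    | cons a l ih =>
        obtain ⟨Γ, hΓ, hΓl⟩ := ih (fun χ hχ => hl χ (by simp [hχ]))
        obtain ⟨Δ, hΔ, haΔ⟩ := hl a (by simp)
        rcases hc.total hΓ hΔ with h | h
        · exact ⟨Δ, hΔ, fun χ hχ => by
            rcases List.mem_cons.1 hχ with h' | h'
            · subst h'; exact haΔ
            · exact h (hΓl χ h')⟩
        · exact ⟨Γ, hΓ, fun χ hχ => by
            rcases List.mem_cons.1 hχ with h' | h'
            · subst h'; exact h haΔ
            · exact hΓl χ h'⟩
  obtain ⟨Γ, hΓ, hΓl⟩ := this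
  exact hcon Γ hΓ l hΓl

lemma lindenbaum {Γ : Set Formula} (h : ConS Γ) : ∃ Δ, Γ ⊆ Δ ∧ MCS Δ := by
  obtain ⟨m, hm1, hm2⟩ := zorn_subset_nonempty {Δ : Set Formula | ConS Δ}
    (fun c hc hchain hne => ⟨⋃₀ c, con_union_chain hchain (fun Γ hΓ => hc hΓ) hne,
      fun s hs => Set.subset_sUnion_of_mem hs⟩) Γ h
  refine ⟨m, hm1, hm2.1, ?_⟩
  intro φ
  by_contra hc
  push_neg at hc
  obtain ⟨h1, h2⟩ := hc
  have hni1 : ¬ ConS (m ∪ {φ}) := by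
    intro hcc
    have := hm2.2 hcc (Set.subset_union_left)
    exact h1 (this (by simp))
  have hni2 : ¬ ConS (m ∪ {φ.neg}) := by
    intro hcc
    have := hm2.2 hcc (Set.subset_union_left)
    exact h2 (this (by simp))
  obtain ⟨l1, hl1, hp1⟩ := con_extract hni1
  obtain ⟨l2, hl2, hp2⟩ := con_extract hni2
  refine hm2.1 (l1 ++ l2) ?_ ?_
  · intro χ hχ; rcases List.mem_append.1 hχ with h' | h'
    · exact hl1 χ h'
    · exact hl2 χ h'
  · have m1 : Prov ((conjList (l1 ++ l2)).imp φ.neg) :=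
      prov_trans (prov_conj_mono (fun χ hχ => List.mem_append.2 (Or.inl hχ))) hp1
    have m2 : Prov ((conjList (l1 ++ l2)).imp φ.neg.neg) :=
      prov_trans (prov_conj_mono (fun χ hχ => List.mem_append.2 (Or.inr hχ))) hp2
    exact prov_imp_mp m2 m1

lemma con_empty : ConS (∅ : Set Formula) := by
  intro l hl hp
  have : l = [] := by
    cases l with
    | nil => rfl
    | cons a l => exact absurd (hl a (by simp)) (by simp)
  subst this
  exact not_prov_bot (hp.mp prov_top)

-- Canonical model

lemma exists_mcs : ∃ Δ : Set Formula, MCS Δ := by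
  obtain ⟨Δ, _, hΔ⟩ := lindenbaum con_empty
  exact ⟨Δ, hΔ⟩

noncomputable def canM : KripkeModel where
  W := {Γ : Set Formula // MCS Γ}
  nonempty := by
    obtain ⟨Δ, hΔ⟩ := exists_mcs
    exact ⟨⟨Δ, hΔ⟩⟩
  rel := fun Γ Δ => ∀ χ : Formula, χ.box ∈ Γ.1 → χ ∈ Δ.1
  val := fun Γ p => Formula.var p ∈ Γ.1

lemma canM_symm : Symm canM := by
  intro Γ Δ hrel χ hχ
  by_contra hc
  have h1 : χ.neg ∈ Γ.1 := (mcs_neg_iff Γ.2).2 hc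
  have h2 : χ.neg.dia.box ∈ Γ.1 := mcs_mp Γ.2 (mcs_mem_of_prov Γ.2 (Prov.axB χ.neg)) h1
  have h3 : χ.neg.dia ∈ Δ.1 := hrel _ h2
  -- χ.neg.dia = (χ.neg.neg.box).neg
  have h4 : χ.neg.neg.box ∈ Δ.1 :=
    mcs_mp Δ.2 (mcs_mem_of_prov Δ.2 (prov_box_imp (by
      apply Prov.taut; intro v hb hi
      simp only [Formula.neg, hi, hb]
      cases v χ <;> rfl))) hχ
  exact mcs_not_both Δ.2 h4 h3

lemma can_truth : ∀ (φ : Formula) (Γ : canM.W), canM.Sat φ Γ ↔ φ ∈ Γ.1 := by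
  intro φ
  induction φ with
  | var p => intro Γ; rfl
  | bot =>
      intro Γ
      simp only [sat_bot, false_iff]
      intro hc
      refine Γ.2.1 [Formula.bot] (by simpa using hc) ?_
      apply Prov.taut; intro v hb hi
      simp only [conjList, Formula.and, Formula.neg, Formula.top, hi, hb]
      rfl
  | imp φ ψ ihφ ihψ =>
      intro Γ
      simp only [sat_imp, ihφ, ihψ, mcs_imp_iff Γ.2]
  | box φ ih =>
      intro Γ
      constructor
      · intro hsat
        by_contra hc
        -- build a successor MCS avoiding φ
        have hcon : ConS ({χ | χ.box ∈ Γ.1} ∪ {φ.neg}) := by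
          intro l hl hp
          -- extract
          have hex : ∃ l' : List Formula, (∀ χ ∈ l', χ.box ∈ Γ.1) ∧
              Prov ((conjList l').imp φ.neg.neg) := by
            classical
            refine ⟨l.filter (fun χ => χ != φ.neg), ?_, ?_⟩
            · intro χ hχ
              have h1 := List.of_mem_filter hχ
              have h2 := List.mem_of_mem_filter hχ
              rcases hl χ h2 with h | h
              · exact h
              · simp_all
            · have hmono : Prov ((conjList (φ.neg :: l.filter (fun χ => χ != φ.neg))).imp
                  (conjList l)) := by
                apply prov_conj_mono
                intro χ hχ
                by_cases hc' : χ = φ.neg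
                · subst hc'; simp
                · simp only [List.mem_cons]
                  right
                  exact List.mem_filter.2 ⟨hχ, by simpa using hc'⟩
              exact prov_neg_case (prov_trans hmono hp)
          obtain ⟨l', hl', hp'⟩ := hex
          have hdne : Prov (φ.neg.neg.imp φ) := by
            apply Prov.taut; intro v hb hi
            simp only [Formula.neg, hi, hb]
            cases v φ <;> rfl
          have h1 : Prov ((conjList l').imp φ) := prov_trans hp' hdne
          have h2 : Prov ((conjList (l'.map Formula.box)).imp φ.box) :=
            prov_trans prov_box_conj (prov_box_imp h1)
          have h3 : φ.box ∈ Γ.1 := by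
            refine mcs_closed Γ.2 (l'.map Formula.box) ?_ h2
            intro χ hχ
            obtain ⟨ξ, hξ, rfl⟩ := List.mem_map.1 hχ
            exact hl' ξ hξ
          exact hc h3
        obtain ⟨Δ, hΔ1, hΔ2⟩ := lindenbaum hcon
        have hrel : canM.rel Γ ⟨Δ, hΔ2⟩ := by
          intro χ hχ
          exact hΔ1 (Or.inl hχ)
        have hφΔ : φ ∈ Δ := (ih ⟨Δ, hΔ2⟩).1 (hsat _ hrel)
        exact mcs_not_both hΔ2 hφΔ (hΔ1 (Or.inr rfl))
      · intro hmem x hx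
        exact (ih x).2 (hx φ hmem)
section ULKBdev3
open Formula

def EquivF (φ ψ : Formula) : Prop := ∀ (M : KripkeModel) (w : M.W), M.Sat φ w ↔ M.Sat ψ w

lemma EquivF.refl (φ : Formula) : EquivF φ φ := fun _ _ => Iff.rfl

-- vsgn computation lemmas
@[simp] lemma vsgn_var_true {p : ℕ} : vsgn (Formula.var p) true = {p} := rfl
@[simp] lemma vsgn_var_false {p : ℕ} : vsgn (Formula.var p) false = ∅ := rfl
@[simp] lemma vsgn_bot {b : Bool} : vsgn Formula.bot b = ∅ := by cases b <;> rfl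
@[simp] lemma vsgn_imp {φ ψ : Formula} {b : Bool} :
    vsgn (φ.imp ψ) b = vsgn φ (!b) ∪ vsgn ψ b := by cases b <;> rfl
@[simp] lemma vsgn_box {φ : Formula} {b : Bool} : vsgn φ.box b = vsgn φ b := by cases b <;> rfl
@[simp] lemma vsgn_neg {φ : Formula} {b : Bool} : vsgn φ.neg b = vsgn φ (!b) := by
  simp [Formula.neg]
@[simp] lemma vsgn_top {b : Bool} : vsgn Formula.top b = ∅ := by simp [Formula.top]
@[simp] lemma vsgn_and {φ ψ : Formula} {b : Bool} :
    vsgn (φ.and ψ) b = vsgn φ b ∪ vsgn ψ b := by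
  simp [Formula.and]
@[simp] lemma vsgn_orf {φ ψ : Formula} {b : Bool} :
    vsgn (orf φ ψ) b = vsgn φ b ∪ vsgn ψ b := by
  simp [orf]
@[simp] lemma vsgn_dia {φ : Formula} {b : Bool} : vsgn φ.dia b = vsgn φ b := by
  simp [Formula.dia]

lemma vsgn_conjList_subset {l : List Formula} {b : Bool} {X : Finset ℕ}
    (h : ∀ ρ ∈ l, vsgn ρ b ⊆ X) : vsgn (conjList l) b ⊆ X := by
  induction l with
  | nil => simp [conjList]
  | cons a l ih =>
      simp only [conjList, vsgn_and, Finset.union_subset_iff]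
      exact ⟨h a (by simp), ih (fun ρ hρ => h ρ (by simp [hρ]))⟩

lemma vsgn_disjList_subset {l : List Formula} {b : Bool} {X : Finset ℕ}
    (h : ∀ ρ ∈ l, vsgn ρ b ⊆ X) : vsgn (disjList l) b ⊆ X := by
  induction l with
  | nil => simp [disjList]
  | cons a l ih =>
      simp only [disjList, vsgn_orf, Finset.union_subset_iff]
      exact ⟨h a (by simp), ih (fun ρ hρ => h ρ (by simp [hρ]))⟩

-- depth computation lemmas
@[simp] lemma depth_neg {φ : Formula} : φ.neg.depth = φ.depth := by
  simp [Formula.neg, Formula.depth]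
@[simp] lemma depth_top : Formula.top.depth = 0 := rfl
@[simp] lemma depth_and {φ ψ : Formula} : (φ.and ψ).depth = max φ.depth ψ.depth := by
  simp [Formula.and, Formula.depth]
@[simp] lemma depth_orf {φ ψ : Formula} : (orf φ ψ).depth = max φ.depth ψ.depth := by
  simp [orf, Formula.depth]
@[simp] lemma depth_dia {φ : Formula} : φ.dia.depth = φ.depth + 1 := by
  simp [Formula.dia, Formula.depth]

lemma depth_conjList_le {l : List Formula} {n : ℕ} (h : ∀ ρ ∈ l, ρ.depth ≤ n) :
    (conjList l).depth ≤ n := by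
  induction l with
  | nil => simp [conjList, Formula.depth]
  | cons a l ih =>
      simp only [conjList, depth_and, max_le_iff]
      exact ⟨h a (by simp), ih (fun ρ hρ => h ρ (by simp [hρ]))⟩

lemma depth_disjList_le {l : List Formula} {n : ℕ} (h : ∀ ρ ∈ l, ρ.depth ≤ n) :
    (disjList l).depth ≤ n := by
  induction l with
  | nil => simp [disjList, Formula.depth]
  | cons a l ih =>
      simp only [disjList, depth_orf, max_le_iff]
      exact ⟨h a (by simp), ih (fun ρ hρ => h ρ (by simp [hρ]))⟩

-- DNF machinery

def dnfL (ats : List Formula) : List Formula :=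
  ((ats.sublists.map conjList).sublists.map disjList)

def ExprD (ats : List Formula) (χ : Formula) : Prop := ∃ ρ ∈ dnfL ats, EquivF χ ρ

lemma mem_dnfL {ats : List Formula} {ρ : Formula} :
    ρ ∈ dnfL ats ↔ ∃ s, List.Sublist s (ats.sublists.map conjList) ∧ ρ = disjList s := by
  simp only [dnfL, List.mem_map, List.mem_sublists]
  constructor
  · rintro ⟨s, hs, rfl⟩; exact ⟨s, hs, rfl⟩
  · rintro ⟨s, hs, rfl⟩; exact ⟨s, hs, rfl⟩

lemma mem_conjPool {ats : List Formula} {c : Formula} :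
    c ∈ ats.sublists.map conjList ↔ ∃ t, List.Sublist t ats ∧ c = conjList t := by
  simp only [List.mem_map, List.mem_sublists]
  constructor
  · rintro ⟨t, ht, rfl⟩; exact ⟨t, ht, rfl⟩
  · rintro ⟨t, ht, rfl⟩; exact ⟨t, ht, rfl⟩

lemma expr_congr {ats : List Formula} {χ χ' : Formula} (h : EquivF χ χ')
    (he : ExprD ats χ) : ExprD ats χ' := by
  obtain ⟨ρ, hρ, heq⟩ := he
  exact ⟨ρ, hρ, fun M w => (h M w).symm.trans (heq M w)⟩

lemma expr_bot {ats : List Formula} : ExprD ats Formula.bot :=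
  ⟨disjList [], mem_dnfL.2 ⟨[], List.nil_sublist _, rfl⟩, fun M w => by simp [disjList]⟩

lemma expr_topc {ats : List Formula} : ExprD ats Formula.bot.neg := by
  refine ⟨disjList [conjList []], mem_dnfL.2 ⟨[conjList []], ?_, rfl⟩, ?_⟩
  · rw [List.singleton_sublist, mem_conjPool]
    exact ⟨[], List.nil_sublist _, rfl⟩
  · intro M w; simp [disjList, conjList]

lemma expr_atom {ats : List Formula} {a : Formula} (h : a ∈ ats) : ExprD ats a := by
  refine ⟨disjList [conjList [a]], mem_dnfL.2 ⟨[conjList [a]], ?_, rfl⟩, ?_⟩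
  · rw [List.singleton_sublist, mem_conjPool]
    exact ⟨[a], List.singleton_sublist.2 h, rfl⟩
  · intro M w; simp [disjList, conjList]

lemma expr_or {ats : List Formula} {χ1 χ2 : Formula} (h1 : ExprD ats χ1)
    (h2 : ExprD ats χ2) : ExprD ats (orf χ1 χ2) := by
  obtain ⟨ρ1, hρ1, he1⟩ := h1
  obtain ⟨ρ2, hρ2, he2⟩ := h2
  obtain ⟨s1, hs1, rfl⟩ := mem_dnfL.1 hρ1
  obtain ⟨s2, hs2, rfl⟩ := mem_dnfL.1 hρ2
  set pool := ats.sublists.map conjList with hpool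
  refine ⟨disjList (pool.filter (fun c => decide (c ∈ s1 ∨ c ∈ s2))),
    mem_dnfL.2 ⟨_, List.filter_sublist, rfl⟩, ?_⟩
  intro M w
  simp only [sat_orf, he1 M w, he2 M w, sat_disjList, List.mem_filter, decide_eq_true_eq]
  constructor
  · rintro (⟨c, hc, hsat⟩ | ⟨c, hc, hsat⟩)
    · exact ⟨c, ⟨hs1.subset hc, Or.inl hc⟩, hsat⟩
    · exact ⟨c, ⟨hs2.subset hc, Or.inr hc⟩, hsat⟩
  · rintro ⟨c, ⟨_, hc | hc⟩, hsat⟩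
    · exact Or.inl ⟨c, hc, hsat⟩
    · exact Or.inr ⟨c, hc, hsat⟩

lemma expr_and {ats : List Formula} {χ1 χ2 : Formula} (h1 : ExprD ats χ1)
    (h2 : ExprD ats χ2) : ExprD ats (χ1.and χ2) := by
  classical
  obtain ⟨ρ1, hρ1, he1⟩ := h1
  obtain ⟨ρ2, hρ2, he2⟩ := h2
  obtain ⟨s1, hs1, rfl⟩ := mem_dnfL.1 hρ1
  obtain ⟨s2, hs2, rfl⟩ := mem_dnfL.1 hρ2
  set pool := ats.sublists.map conjList with hpool
  refine ⟨disjList (pool.filter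
      (fun c => decide (∃ a ∈ s1, ∃ b ∈ s2, EquivF c (a.and b)))),
    mem_dnfL.2 ⟨_, List.filter_sublist, rfl⟩, ?_⟩
  intro M w
  simp only [sat_and, he1 M w, he2 M w, sat_disjList, List.mem_filter, decide_eq_true_eq]
  constructor
  · rintro ⟨⟨a, ha, hsa⟩, ⟨b, hb, hsb⟩⟩
    obtain ⟨ta, hta, rfl⟩ := mem_conjPool.1 (hs1.subset ha)
    obtain ⟨tb, htb, rfl⟩ := mem_conjPool.1 (hs2.subset hb)
    refine ⟨conjList (ats.filter (fun x => decide (x ∈ ta ∨ x ∈ tb))), ⟨?_, ?_⟩, ?_⟩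
    · exact mem_conjPool.2 ⟨_, List.filter_sublist, rfl⟩
    · refine ⟨_, ha, _, hb, ?_⟩
      intro M' w'
      simp only [sat_and, sat_conjList, List.mem_filter, decide_eq_true_eq]
      constructor
      · intro h
        exact ⟨fun χ hχ => h χ ⟨hta.subset hχ, Or.inl hχ⟩,
               fun χ hχ => h χ ⟨htb.subset hχ, Or.inr hχ⟩⟩
      · rintro ⟨hA, hB⟩ χ ⟨_, hχ | hχ⟩
        · exact hA χ hχ
        · exact hB χ hχ
    · rw [sat_conjList] at hsa hsb ⊢
      intro χ hχ
      rw [List.mem_filter, decide_eq_true_eq] at hχ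
      rcases hχ.2 with h | h
      · exact hsa χ h
      · exact hsb χ h
  · rintro ⟨c, ⟨_, a, ha, b, hb, heq⟩, hsat⟩
    have := (heq M w).1 hsat
    rw [sat_and] at this
    exact ⟨⟨a, ha, this.1⟩, ⟨b, hb, this.2⟩⟩

-- The family

noncomputable def baseAts (P Q : Finset ℕ) : List Formula :=
  (P.toList.map Formula.var) ++ (Q.toList.map (fun q => (Formula.var q).neg))

noncomputable def atsOf (P Q : Finset ℕ) : ℕ → List Formula
  | 0 => baseAts P Q
  | (n+1) => baseAts P Q
      ++ (dnfL (atsOf P Q n)).map Formula.box ++ (dnfL (atsOf P Q n)).map Formula.dia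

noncomputable def Fam (n : ℕ) (P Q : Finset ℕ) : List Formula := dnfL (atsOf P Q n)

lemma base_mem_atsOf {n : ℕ} {P Q : Finset ℕ} {a : Formula}
    (h : a ∈ baseAts P Q) : a ∈ atsOf P Q n := by
  cases n with
  | zero => exact h
  | succ n => simp only [atsOf, List.append_assoc, List.mem_append]; exact Or.inl h

lemma atsOf_succ (P Q : Finset ℕ) (n : ℕ) : atsOf P Q (n+1) = baseAts P Q
    ++ (dnfL (atsOf P Q n)).map Formula.box ++ (dnfL (atsOf P Q n)).map Formula.dia := rfl

lemma base_bounds {P Q : Finset ℕ} {a : Formula} (ha : a ∈ baseAts P Q) :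
    PQFormula P Q a ∧ a.depth = 0 := by
  rcases List.mem_append.1 ha with h | h
  · obtain ⟨p, hp, rfl⟩ := List.mem_map.1 h
    refine ⟨⟨?_, ?_⟩, rfl⟩
    · simp [vpos, Finset.singleton_subset_iff, Finset.mem_toList.1 hp]
    · simp [vneg]
  · obtain ⟨q, hq, rfl⟩ := List.mem_map.1 h
    refine ⟨⟨?_, ?_⟩, by simp [Formula.depth, Formula.neg]⟩
    · simp [vpos]
    · simp [vneg, Finset.singleton_subset_iff, Finset.mem_toList.1 hq]

lemma dnf_bounds {ats : List Formula} {n : ℕ} {P Q : Finset ℕ}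
    (h : ∀ a ∈ ats, PQFormula P Q a ∧ a.depth ≤ n) :
    ∀ ρ ∈ dnfL ats, PQFormula P Q ρ ∧ ρ.depth ≤ n := by
  intro ρ hρ
  obtain ⟨s, hs, rfl⟩ := mem_dnfL.1 hρ
  have hmem : ∀ c ∈ s, PQFormula P Q c ∧ c.depth ≤ n := by
    intro c hc
    obtain ⟨t, ht, rfl⟩ := mem_conjPool.1 (hs.subset hc)
    have hx : ∀ x ∈ t, PQFormula P Q x ∧ x.depth ≤ n := fun x hx => h x (ht.subset hx)
    exact ⟨⟨vsgn_conjList_subset (fun x hh => (hx x hh).1.1),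
      vsgn_conjList_subset (fun x hh => (hx x hh).1.2)⟩,
      depth_conjList_le (fun x hh => (hx x hh).2)⟩
  exact ⟨⟨vsgn_disjList_subset (fun c hc => (hmem c hc).1.1),
    vsgn_disjList_subset (fun c hc => (hmem c hc).1.2)⟩,
    depth_disjList_le (fun c hc => (hmem c hc).2)⟩

lemma atsOf_bounds : ∀ (n : ℕ) (P Q : Finset ℕ), ∀ a ∈ atsOf P Q n,
    PQFormula P Q a ∧ a.depth ≤ n := by
  intro n
  induction n with
  | zero =>
      intro P Q a ha
      obtain ⟨h1, h2⟩ := base_bounds ha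
      exact ⟨h1, le_of_eq h2⟩
  | succ n ih =>
      intro P Q a ha
      rw [atsOf_succ] at ha
      rcases List.mem_append.1 ha with h | h
      · rcases List.mem_append.1 h with h | h
        · obtain ⟨h1, h2⟩ := base_bounds h
          exact ⟨h1, by omega⟩
        · obtain ⟨ρ, hρ, rfl⟩ := List.mem_map.1 h
          obtain ⟨⟨g1, g2⟩, g3⟩ := dnf_bounds (ih P Q) ρ hρ
          refine ⟨⟨?_, ?_⟩, ?_⟩
          · simpa [vpos] using g1
          · simpa [vneg] using g2
          · simp only [Formula.depth]; omega
      · obtain ⟨ρ, hρ, rfl⟩ := List.mem_map.1 h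
        obtain ⟨⟨g1, g2⟩, g3⟩ := dnf_bounds (ih P Q) ρ hρ
        refine ⟨⟨?_, ?_⟩, ?_⟩
        · simpa [vpos] using g1
        · simpa [vneg] using g2
        · simp only [depth_dia]; omega

lemma fam_bounds {n : ℕ} {P Q : Finset ℕ} {ρ : Formula} (hρ : ρ ∈ Fam n P Q) :
    PQFormula P Q ρ ∧ ρ.depth ≤ n :=
  dnf_bounds (atsOf_bounds n P Q) ρ hρ

-- Adequacy

theorem adequacy_aux : ∀ (φ : Formula) (n : ℕ) (P Q : Finset ℕ), φ.depth ≤ n →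
    ((vpos φ ⊆ P → vneg φ ⊆ Q → ∃ ρ ∈ Fam n P Q, EquivF φ ρ) ∧
     (vpos φ ⊆ Q → vneg φ ⊆ P → ∃ ρ ∈ Fam n P Q, EquivF φ.neg ρ)) := by
  intro φ
  induction φ with
  | var p =>
      intro n P Q _
      constructor
      · intro h1 _
        have hp : p ∈ P := h1 (by simp [vpos])
        refine expr_atom (base_mem_atsOf ?_)
        simp only [baseAts, List.mem_append, List.mem_map]
        exact Or.inl ⟨p, Finset.mem_toList.2 hp, rfl⟩
      · intro h1 _
        have hp : p ∈ Q := h1 (by simp [vpos])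
        refine expr_atom (base_mem_atsOf ?_)
        simp only [baseAts, List.mem_append, List.mem_map]
        exact Or.inr ⟨p, Finset.mem_toList.2 hp, rfl⟩
  | bot =>
      intro n P Q _
      exact ⟨fun _ _ => expr_bot, fun _ _ => expr_topc⟩
  | imp α β ihα ihβ =>
      intro n P Q hd
      rw [Formula.depth, max_le_iff] at hd
      constructor
      · intro h1 h2
        simp only [vpos, vneg, vsgn_imp, Bool.not_true, Bool.not_false,
          Finset.union_subset_iff] at h1 h2
        have e1 := (ihα n P Q hd.1).2 h2.1 h1.1
        have e2 := (ihβ n P Q hd.2).1 h1.2 h2.2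
        refine expr_congr ?_ (expr_or e1 e2)
        intro M w
        simp only [sat_orf, sat_neg, sat_imp]
        tauto
      · intro h1 h2
        simp only [vpos, vneg, vsgn_imp, Bool.not_true, Bool.not_false,
          Finset.union_subset_iff] at h1 h2
        have e1 := (ihα n P Q hd.1).1 h2.1 h1.1
        have e2 := (ihβ n P Q hd.2).2 h1.2 h2.2
        refine expr_congr ?_ (expr_and e1 e2)
        intro M w
        simp only [sat_and, sat_neg, sat_imp]
        tauto
  | box φ ih =>
      intro n P Q hd
      rw [Formula.depth] at hd
      rcases n with _ | m
      · omega
      have hdφ : φ.depth ≤ m := by omega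
      constructor
      · intro h1 h2
        simp only [vpos, vneg, vsgn_box] at h1 h2
        obtain ⟨ρ', hρ', he⟩ := (ih m P Q hdφ).1 h1 h2
        have hmem : ρ'.box ∈ atsOf P Q (m + 1) := by
          rw [atsOf_succ]
          exact List.mem_append.2 (Or.inl (List.mem_append.2 (Or.inr
            (List.mem_map.2 ⟨ρ', hρ', rfl⟩))))
        refine expr_congr ?_ (expr_atom hmem)
        intro M w
        simp only [sat_box]
        exact forall_congr' (fun x => imp_congr Iff.rfl ((he M x).symm))
      · intro h1 h2
        simp only [vpos, vneg, vsgn_box] at h1 h2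
        obtain ⟨ρ', hρ', he⟩ := (ih m P Q hdφ).2 h1 h2
        have hmem : ρ'.dia ∈ atsOf P Q (m + 1) := by
          rw [atsOf_succ]
          exact List.mem_append.2 (Or.inr (List.mem_map.2 ⟨ρ', hρ', rfl⟩))
        refine expr_congr ?_ (expr_atom hmem)
        intro M w
        constructor
        · intro h
          rw [sat_dia] at h
          obtain ⟨x, hx, hsx⟩ := h
          rw [sat_neg, sat_box]
          push_neg
          exact ⟨x, hx, (he M x).2 hsx⟩
        · intro h
          rw [sat_neg, sat_box] at h
          push_neg at h
          obtain ⟨x, hx, hsx⟩ := h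
          rw [sat_dia]
          exact ⟨x, hx, (he M x).1 hsx⟩

lemma adequacy {φ : Formula} {n : ℕ} {P Q : Finset ℕ} (hd : φ.depth ≤ n)
    (h1 : vpos φ ⊆ P) (h2 : vneg φ ⊆ Q) : ∃ ρ ∈ Fam n P Q, EquivF φ ρ :=
  (adequacy_aux φ n P Q hd).1 h1 h2

end ULKBdev3
section ULKBdev4
open Formula

/-- depth-k theory transfer relation -/
def ZS (P Q : Finset ℕ) (M M' : KripkeModel) (x : M.W) (k : ℕ) (y : M'.W) : Prop :=
  ∀ χ : Formula, vpos χ ⊆ P → vneg χ ⊆ Q → χ.depth ≤ k → M.Sat χ x → M'.Sat χ y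

lemma ZS.mono {P Q M M'} {x : M.W} {k : ℕ} {y : M'.W} (h : ZS P Q M M' x k y)
    {m : ℕ} (hm : m ≤ k) : ZS P Q M M' x m y :=
  fun χ hp hq hd => h χ hp hq (le_trans hd hm)

lemma ZS.val1 {P Q M M'} {x : M.W} {k : ℕ} {y : M'.W} (h : ZS P Q M M' x k y)
    {p : ℕ} (hp : p ∈ P) : M.val x p → M'.val y p := by
  intro hv
  exact h (Formula.var p) (by simp [vpos, Finset.singleton_subset_iff, hp])
    (by simp [vneg]) (by simp [Formula.depth]) hv

lemma ZS.val2 {P Q M M'} {x : M.W} {k : ℕ} {y : M'.W} (h : ZS P Q M M' x k y)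
    {q : ℕ} (hq : q ∈ Q) : ¬ M.val x q → ¬ M'.val y q := by
  intro hv
  have := h (Formula.var q).neg (by simp [vpos])
    (by simp [vneg, Finset.singleton_subset_iff, hq]) (by simp [Formula.depth]) hv
  exact this

lemma fam_filter_pol {n : ℕ} {P Q : Finset ℕ} {f : Formula → Bool} {b : Bool} :
    vsgn (conjList ((Fam n P Q).filter f)) b ⊆ (if b then P else Q) := by
  apply vsgn_conjList_subset
  intro ρ hρ
  have := (fam_bounds (List.mem_of_mem_filter hρ)).1
  cases b
  · exact this.2
  · exact this.1

lemma ZS.forth {P Q : Finset ℕ} {M M' : KripkeModel} {x : M.W} {k : ℕ} {y : M'.W}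
    (h : ZS P Q M M' x (k+1) y) {u : M.W} (hu : M.rel x u) :
    ∃ v, M'.rel y v ∧ ZS P Q M M' u k v := by
  classical
  set C := conjList ((Fam k P Q).filter (fun ρ => decide (M.Sat ρ u))) with hC
  have hCu : M.Sat C u := by
    rw [hC, sat_conjList]
    intro ρ hρ
    have := List.of_mem_filter hρ
    simpa using this
  have hdia : M.Sat C.dia x := sat_dia.2 ⟨u, hu, hCu⟩
  have hpol1 : vpos C.dia ⊆ P := by
    simpa [vpos] using (fam_filter_pol (n := k) (P := P) (Q := Q)
      (f := fun ρ => decide (M.Sat ρ u)) (b := true))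
  have hpol2 : vneg C.dia ⊆ Q := by
    simpa [vneg] using (fam_filter_pol (n := k) (P := P) (Q := Q)
      (f := fun ρ => decide (M.Sat ρ u)) (b := false))
  have hdep : C.dia.depth ≤ k + 1 := by
    rw [depth_dia]
    have : C.depth ≤ k :=
      depth_conjList_le (fun ρ hρ => (fam_bounds (List.mem_of_mem_filter hρ)).2)
    omega
  have := h C.dia hpol1 hpol2 hdep hdia
  obtain ⟨v, hv, hCv⟩ := sat_dia.1 this
  refine ⟨v, hv, ?_⟩
  intro χ hp hq hd hsat
  obtain ⟨ρ, hρ, he⟩ := adequacy hd hp hq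
  have h1 : M.Sat ρ u := (he M u).1 hsat
  have hmem : ρ ∈ (Fam k P Q).filter (fun ρ => decide (M.Sat ρ u)) :=
    List.mem_filter.2 ⟨hρ, by simpa using h1⟩
  have h2 := sat_conjList.1 hCv ρ hmem
  exact (he M' v).2 h2

lemma fam_filter_pol_d {n : ℕ} {P Q : Finset ℕ} {f : Formula → Bool} {b : Bool} :
    vsgn (disjList ((Fam n P Q).filter f)) b ⊆ (if b then P else Q) := by
  apply vsgn_disjList_subset
  intro ρ hρ
  have := (fam_bounds (List.mem_of_mem_filter hρ)).1
  cases b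
  · exact this.2
  · exact this.1

lemma ZS.back {P Q : Finset ℕ} {M M' : KripkeModel} {x : M.W} {k : ℕ} {y : M'.W}
    (h : ZS P Q M M' x (k+1) y) {v : M'.W} (hv : M'.rel y v) :
    ∃ u, M.rel x u ∧ ZS P Q M M' u k v := by
  classical
  by_contra hc
  push_neg at hc
  set D := disjList ((Fam k P Q).filter (fun ρ => !decide (M'.Sat ρ v))) with hD
  have hbox : M.Sat D.box x := by
    rw [sat_box]
    intro u hu
    have hnz := hc u hu
    simp only [ZS, not_forall] at hnz
    obtain ⟨χ, hp, hq, hd, hsat, hnsat⟩ := hnz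
    obtain ⟨ρ, hρ, he⟩ := adequacy hd hp hq
    have h1 : M.Sat ρ u := (he M u).1 hsat
    have h2 : ¬ M'.Sat ρ v := fun hh => hnsat ((he M' v).2 hh)
    rw [hD, sat_disjList]
    exact ⟨ρ, List.mem_filter.2 ⟨hρ, by simpa using h2⟩, h1⟩
  have hpol1 : vpos D.box ⊆ P := by
    simpa [vpos] using (fam_filter_pol_d (n := k) (P := P) (Q := Q)
      (f := fun ρ => !decide (M'.Sat ρ v)) (b := true))
  have hpol2 : vneg D.box ⊆ Q := by
    simpa [vneg] using (fam_filter_pol_d (n := k) (P := P) (Q := Q)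
      (f := fun ρ => !decide (M'.Sat ρ v)) (b := false))
  have hdep : D.box.depth ≤ k + 1 := by
    have : D.depth ≤ k :=
      depth_disjList_le (fun ρ hρ => (fam_bounds (List.mem_of_mem_filter hρ)).2)
    simp only [Formula.depth]
    omega
  have hDy := h D.box hpol1 hpol2 hdep hbox
  have hDv : M'.Sat D v := hDy v hv
  obtain ⟨ρ, hρ, hsatρ⟩ := sat_disjList.1 hDv
  have h5 := List.of_mem_filter hρ
  simp only [Bool.not_eq_true', decide_eq_false_iff_not] at h5
  exact h5 hsatρ

end ULKBdev4
section ULKBdev5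
open Formula

def glue (M M' : KripkeModel) (P1 P2 Q2 Q3 : Finset ℕ) : KripkeModel where
  W := (M.W × ℕ × M'.W) ⊕ M'.W
  nonempty := ⟨Sum.inr M'.nonempty.some⟩
  rel := fun a b =>
    match a, b with
    | Sum.inl (x, k, y), Sum.inl (u, j, v) =>
        ZS P2 Q2 M M' x k y ∧ ZS P2 Q2 M M' u j v ∧ M.rel x u ∧ M'.rel y v ∧
          (j = k + 1 ∨ k = j + 1)
    | Sum.inl (x, k, y), Sum.inr v => ZS P2 Q2 M M' x k y ∧ k = 0 ∧ M'.rel y v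
    | Sum.inr y, Sum.inl (u, j, v) => ZS P2 Q2 M M' u j v ∧ j = 0 ∧ M'.rel v y
    | Sum.inr y, Sum.inr v => M'.rel y v
  val := fun a p =>
    match a with
    | Sum.inl (x, _, y) => (p ∈ P1 ∪ P2 ∧ M.val x p) ∨ (p ∈ Q2 ∪ Q3 ∧ M'.val y p)
    | Sum.inr y => M'.val y p

lemma glue_symm {M M' : KripkeModel} {P1 P2 Q2 Q3 : Finset ℕ}
    (hM : Symm M) (hM' : Symm M') : Symm (glue M M' P1 P2 Q2 Q3) := by
  rintro (⟨x, k, y⟩ | y) (⟨u, j, v⟩ | v) h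
  · obtain ⟨h1, h2, h3, h4, h5⟩ := h
    exact ⟨h2, h1, hM _ _ h3, hM' _ _ h4, h5.symm⟩
  · obtain ⟨h1, h2, h3⟩ := h
    exact ⟨h1, h2, h3⟩
  · obtain ⟨h1, h2, h3⟩ := h
    exact ⟨h1, h2, h3⟩
  · exact hM' _ _ h

def gpair {M M' : KripkeModel} {P1 P2 Q2 Q3 : Finset ℕ} :
    (glue M M' P1 P2 Q2 Q3).W → M'.W → Prop
  | Sum.inl (x, k, y), y' => y' = y ∧ ZS P2 Q2 M M' x k y
  | Sum.inr y, y' => y' = y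

lemma Bpres {M M' : KripkeModel} {P1 P2 P3 Q2 Q3 : Finset ℕ}
    (hM' : Symm M') (h13 : Disjoint P1 P3) (h23 : Disjoint P2 P3) :
    ∀ χ : Formula,
      (vpos χ ⊆ P2 ∪ P3 → vneg χ ⊆ Q2 ∪ Q3 →
        ∀ (a : (glue M M' P1 P2 Q2 Q3).W) (y' : M'.W), gpair a y' →
          ((glue M M' P1 P2 Q2 Q3).Sat χ a → M'.Sat χ y')) ∧
      (vpos χ ⊆ Q2 ∪ Q3 → vneg χ ⊆ P2 ∪ P3 →
        ∀ (a : (glue M M' P1 P2 Q2 Q3).W) (y' : M'.W), gpair a y' →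
          (M'.Sat χ y' → (glue M M' P1 P2 Q2 Q3).Sat χ a)) := by
  intro χ
  induction χ with
  | var p =>
      constructor
      · rintro hp _ (⟨x, k, y⟩ | y) y' hpair hsat
        · obtain ⟨rfl, hZ⟩ := hpair
          rcases hsat with ⟨h1, h2⟩ | ⟨h1, h2⟩
          · have hpP : p ∈ P2 ∪ P3 := hp (by simp [vpos])
            rcases Finset.mem_union.1 hpP with hP | hP
            · exact hZ.val1 hP h2
            · exfalso
              rcases Finset.mem_union.1 h1 with h | h
              · exact (Finset.disjoint_left.1 h13) h hP
              · exact (Finset.disjoint_left.1 h23) h hP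
          · exact h2
        · exact hpair ▸ hsat
      · rintro hp _ (⟨x, k, y⟩ | y) y' hpair hsat
        · obtain ⟨rfl, hZ⟩ := hpair
          exact Or.inr ⟨hp (by simp [vpos]), hsat⟩
        · exact hpair ▸ hsat
  | bot => exact ⟨fun _ _ _ _ _ h => h.elim, fun _ _ _ _ _ h => h.elim⟩
  | imp α β ihα ihβ =>
      have hsubs : ∀ {X Y : Finset ℕ}, vpos (α.imp β) ⊆ X → vneg (α.imp β) ⊆ Y →
          vneg α ⊆ X ∧ vpos β ⊆ X ∧ vpos α ⊆ Y ∧ vneg β ⊆ Y := by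
        intro X Y h1 h2
        simp only [vpos, vneg, vsgn_imp, Bool.not_true, Bool.not_false,
          Finset.union_subset_iff] at h1 h2
        exact ⟨h1.1, h1.2, h2.1, h2.2⟩
      constructor
      · intro hp hq a y' hpair hsat hα
        obtain ⟨n1, p1, p2, n2⟩ := hsubs hp hq
        exact (ihβ.1 p1 n2 a y' hpair) (hsat ((ihα.2 p2 n1 a y' hpair) hα))
      · intro hp hq a y' hpair hsat hα
        obtain ⟨n1, p1, p2, n2⟩ := hsubs hp hq
        exact (ihβ.2 p1 n2 a y' hpair) (hsat ((ihα.1 p2 n1 a y' hpair) hα))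
  | box δ ih =>
      constructor
      · rintro hp hq (⟨x, k, y⟩ | y) y' hpair hsat
        · obtain ⟨rfl, hZ⟩ := hpair
          intro v hrel
          cases k with
          | zero =>
              have hedge : (glue M M' P1 P2 Q2 Q3).rel (Sum.inl (x, 0, y')) (Sum.inr v) :=
                ⟨hZ, rfl, hrel⟩
              exact ih.1 (by simpa [vpos] using hp) (by simpa [vneg] using hq)
                (Sum.inr v) v rfl (hsat _ hedge)
          | succ j =>
              obtain ⟨u, hxu, hZuv⟩ := hZ.back hrel
              have hedge : (glue M M' P1 P2 Q2 Q3).rel (Sum.inl (x, j + 1, y'))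
                  (Sum.inl (u, j, v)) := ⟨hZ, hZuv, hxu, hrel, Or.inr rfl⟩
              exact ih.1 (by simpa [vpos] using hp) (by simpa [vneg] using hq)
                (Sum.inl (u, j, v)) v ⟨rfl, hZuv⟩ (hsat _ hedge)
        · subst hpair
          intro v hrel
          exact ih.1 (by simpa [vpos] using hp) (by simpa [vneg] using hq)
            (Sum.inr v) v rfl (hsat (Sum.inr v) hrel)
      · rintro hp hq (⟨x, k, y⟩ | y) y' hpair hsat
        · obtain ⟨rfl, hZ⟩ := hpair
          rintro (⟨u, j, v⟩ | v) hedge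
          · obtain ⟨_, hZuv, _, hyv, _⟩ := hedge
            exact ih.2 (by simpa [vpos] using hp) (by simpa [vneg] using hq)
              (Sum.inl (u, j, v)) v ⟨rfl, hZuv⟩ (hsat v hyv)
          · obtain ⟨_, _, hyv⟩ := hedge
            exact ih.2 (by simpa [vpos] using hp) (by simpa [vneg] using hq)
              (Sum.inr v) v rfl (hsat v hyv)
        · subst hpair
          rintro (⟨u, j, v⟩ | v) hedge
          · obtain ⟨hZuv, _, hvy⟩ := hedge
            exact ih.2 (by simpa [vpos] using hp) (by simpa [vneg] using hq)
              (Sum.inl (u, j, v)) v ⟨rfl, hZuv⟩ (hsat v (hM' _ _ hvy))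
          · exact ih.2 (by simpa [vpos] using hp) (by simpa [vneg] using hq)
              (Sum.inr v) v rfl (hsat v hedge)

lemma Apres {M M' : KripkeModel} {P1 P2 Q1 Q2 Q3 : Finset ℕ}
    (h13 : Disjoint Q1 Q3) (h23 : Disjoint Q2 Q3) :
    ∀ χ : Formula, ∀ (k : ℕ) (x : M.W) (y : M'.W), ZS P2 Q2 M M' x k y → χ.depth ≤ k →
      ((vpos χ ⊆ P1 ∪ P2 → vneg χ ⊆ Q1 ∪ Q2 →
        (M.Sat χ x → (glue M M' P1 P2 Q2 Q3).Sat χ (Sum.inl (x, k, y)))) ∧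
       (vpos χ ⊆ Q1 ∪ Q2 → vneg χ ⊆ P1 ∪ P2 →
        ((glue M M' P1 P2 Q2 Q3).Sat χ (Sum.inl (x, k, y)) → M.Sat χ x))) := by
  intro χ
  induction χ with
  | var p =>
      intro k x y hZ _
      constructor
      · intro hp _ hv
        exact Or.inl ⟨hp (by simp [vpos]), hv⟩
      · intro hp _ hv
        rcases hv with ⟨h1, h2⟩ | ⟨h1, h2⟩
        · exact h2
        · have hpQ : p ∈ Q1 ∪ Q2 := hp (by simp [vpos])
          have hp2 : p ∈ Q2 := by
            rcases Finset.mem_union.1 h1 with h | h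
            · exact h
            · exfalso
              rcases Finset.mem_union.1 hpQ with h' | h'
              · exact (Finset.disjoint_left.1 h13) h' h
              · exact (Finset.disjoint_left.1 h23) h' h
          by_contra hnx
          exact hZ.val2 hp2 hnx h2
  | bot =>
      intro k x y _ _
      exact ⟨fun _ _ h => h.elim, fun _ _ h => h.elim⟩
  | imp α β ihα ihβ =>
      intro k x y hZ hd
      rw [Formula.depth, max_le_iff] at hd
      have hsubs : ∀ {X Y : Finset ℕ}, vpos (α.imp β) ⊆ X → vneg (α.imp β) ⊆ Y →
          vneg α ⊆ X ∧ vpos β ⊆ X ∧ vpos α ⊆ Y ∧ vneg β ⊆ Y := by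
        intro X Y h1 h2
        simp only [vpos, vneg, vsgn_imp, Bool.not_true, Bool.not_false,
          Finset.union_subset_iff] at h1 h2
        exact ⟨h1.1, h1.2, h2.1, h2.2⟩
      constructor
      · intro hp hq hsat hα
        obtain ⟨n1, p1, p2, n2⟩ := hsubs hp hq
        exact (ihβ k x y hZ hd.2).1 p1 n2 (hsat ((ihα k x y hZ hd.1).2 p2 n1 hα))
      · intro hp hq hsat hα
        obtain ⟨n1, p1, p2, n2⟩ := hsubs hp hq
        exact (ihβ k x y hZ hd.2).2 p1 n2 (hsat ((ihα k x y hZ hd.1).1 p2 n1 hα))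
  | box δ ih =>
      intro k x y hZ hd
      rw [Formula.depth] at hd
      rcases k with _ | j
      · exact absurd hd (by omega)
      constructor
      · intro hp hq hsat
        rintro (⟨u, m, v⟩ | v) hedge
        · obtain ⟨_, hZuv, hxu, _, hm⟩ := hedge
          have hdm : δ.depth ≤ m := by omega
          exact (ih m u v hZuv hdm).1 (by simpa [vpos] using hp)
            (by simpa [vneg] using hq) (hsat u hxu)
        · obtain ⟨_, hk0, _⟩ := hedge
          exact absurd hk0 (by omega)
      · intro hp hq hsat
        intro u hxu
        obtain ⟨v, hyv, hZuv⟩ := hZ.forth hxu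
        have hedge : (glue M M' P1 P2 Q2 Q3).rel (Sum.inl (x, j + 1, y))
            (Sum.inl (u, j, v)) := ⟨hZ, hZuv, hxu, hyv, Or.inr rfl⟩
        exact (ih j u v hZuv (by omega)).2 (by simpa [vpos] using hp)
          (by simpa [vneg] using hq) (hsat _ hedge)

end ULKBdev5
section ULKBdev6
open Formula

lemma prov_of_canValid {χ : Formula} (h : ∀ w : canM.W, canM.Sat χ w) : Prov χ := by
  by_contra hc
  have hcon : ConS {χ.neg} := by
    intro l hl hp
    have hmono : Prov ((conjList [χ.neg]).imp (conjList l)) := by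
      apply prov_conj_mono
      intro ρ hρ
      have := hl ρ hρ
      simp only [Set.mem_singleton_iff] at this
      simp [this]
    have h2 : Prov ((conjList [χ.neg]).imp Formula.bot) := prov_trans hmono hp
    have t : Prov (((conjList [χ.neg]).imp Formula.bot).imp χ) := by
      apply Prov.taut; intro v hb hi
      simp only [conjList, Formula.and, Formula.neg, Formula.top, hi, hb]
      cases v χ <;> rfl
    exact hc (t.mp h2)
  obtain ⟨Δ, hsub, hmcs⟩ := lindenbaum hcon
  exact (can_truth χ.neg ⟨Δ, hmcs⟩).2 (hsub rfl) (h ⟨Δ, hmcs⟩)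

lemma con_pair {a b : Formula} (h : ¬ Prov ((conjList [a, b]).imp Formula.bot)) :
    ConS {a, b} := by
  intro l hl hp
  apply h
  refine prov_trans (prov_conj_mono ?_) hp
  intro χ hχ
  have := hl χ hχ
  simp only [Set.mem_insert_iff, Set.mem_singleton_iff] at this
  simp only [List.mem_cons, List.not_mem_nil, or_false]
  tauto

lemma main_interp (φ : Formula) (P Q : Finset ℕ) :
    ∃ θ : Formula, (vpos θ ⊆ vpos φ \ P ∧ vneg θ ⊆ vneg φ \ Q ∧ Prov (φ.imp θ) ∧
      ∀ ψ : Formula, ψ.vpos ∩ P = ∅ → ψ.vneg ∩ Q = ∅ → Prov (φ.imp ψ) → Prov (θ.imp ψ)) ∧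
      θ.depth ≤ φ.depth := by
  classical
  set n := φ.depth with hn
  set P2 := vpos φ \ P with hP2
  set Q2 := vneg φ \ Q with hQ2
  set L := (Fam n P2 Q2).filter (fun ρ => decide (Prov (φ.imp ρ))) with hL
  refine ⟨conjList L, ⟨?_, ?_, ?_, ?_⟩, ?_⟩
  · exact vsgn_conjList_subset fun ρ hρ => (fam_bounds (List.mem_of_mem_filter hρ)).1.1
  · exact vsgn_conjList_subset fun ρ hρ => (fam_bounds (List.mem_of_mem_filter hρ)).1.2
  · exact prov_conj_intro fun ρ hρ => by simpa using List.of_mem_filter hρ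
  · intro ψ hψp hψq hprov
    by_contra hc
    -- a canonical world satisfying θ and ¬ψ
    have hcon1 : ConS {conjList L, ψ.neg} := by
      apply con_pair
      intro hp
      apply hc
      have t : Prov (((conjList [conjList L, ψ.neg]).imp Formula.bot).imp
          ((conjList L).imp ψ)) := by
        apply Prov.taut; intro v hb hi
        simp only [conjList, Formula.and, Formula.neg, Formula.top, hi, hb]
        cases v (conjList L) <;> cases v ψ <;> rfl
      exact t.mp hp
    obtain ⟨Δ', hsub', hmcs'⟩ := lindenbaum hcon1
    set w' : canM.W := ⟨Δ', hmcs'⟩ with hw'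
    have hθw' : canM.Sat (conjList L) w' := (can_truth _ w').2 (hsub' (by simp))
    have hψw' : ¬ canM.Sat ψ w' := by
      intro hs
      exact mcs_not_both hmcs' ((can_truth ψ w').1 hs) (hsub' (by simp))
    -- a canonical world satisfying φ whose theory is included in that of w'
    set S := (Fam n P2 Q2).filter (fun ρ => !decide (canM.Sat ρ w')) with hS
    set D := disjList S with hD
    have hDpol1 : vpos D ⊆ P2 := by
      simpa [vpos] using (fam_filter_pol_d (n := n) (P := P2) (Q := Q2)
        (f := fun ρ => !decide (canM.Sat ρ w')) (b := true))
    have hDpol2 : vneg D ⊆ Q2 := by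
      simpa [vneg] using (fam_filter_pol_d (n := n) (P := P2) (Q := Q2)
        (f := fun ρ => !decide (canM.Sat ρ w')) (b := false))
    have hDdep : D.depth ≤ n :=
      depth_disjList_le fun ρ hρ => (fam_bounds (List.mem_of_mem_filter hρ)).2
    have hnp : ¬ Prov (φ.imp D) := by
      intro hp
      obtain ⟨ρh, hρh, he⟩ := adequacy hDdep hDpol1 hDpol2
      have hpρ : Prov (φ.imp ρh) := by
        apply prov_of_canValid
        intro w
        intro hφ
        exact (he canM w).1 (sound hp canM canM_symm w hφ)
      have hmemL : ρh ∈ L := List.mem_filter.2 ⟨hρh, by simpa using hpρ⟩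
      have hDw' : canM.Sat D w' := (he canM w').2 (sat_conjList.1 hθw' ρh hmemL)
      obtain ⟨ρ, hρ, hsρ⟩ := sat_disjList.1 hDw'
      have h5 := List.of_mem_filter hρ
      simp only [Bool.not_eq_true', decide_eq_false_iff_not] at h5
      exact h5 hsρ
    have hcon2 : ConS {φ, D.neg} := by
      apply con_pair
      intro hp
      apply hnp
      have t : Prov (((conjList [φ, D.neg]).imp Formula.bot).imp (φ.imp D)) := by
        apply Prov.taut; intro v hb hi
        simp only [conjList, Formula.and, Formula.neg, Formula.top, hi, hb]
        cases v φ <;> cases v D <;> rfl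
      exact t.mp hp
    obtain ⟨Δ, hsub, hmcs⟩ := lindenbaum hcon2
    set w : canM.W := ⟨Δ, hmcs⟩ with hw
    have hφw : canM.Sat φ w := (can_truth _ w).2 (hsub (by simp))
    have hDnw : ¬ canM.Sat D w := by
      intro hs
      exact mcs_not_both hmcs ((can_truth D w).1 hs) (hsub (by simp))
    have hZ : ZS P2 Q2 canM canM w n w' := by
      intro χ hp hq hd hsat
      by_contra hns
      obtain ⟨ρ, hρ, he⟩ := adequacy hd hp hq
      have hnρ : ¬ canM.Sat ρ w' := fun hh => hns ((he canM w').2 hh)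
      have hmemS : ρ ∈ S := List.mem_filter.2 ⟨hρ, by simpa using hnρ⟩
      exact hDnw (sat_disjList.2 ⟨ρ, hmemS, (he canM w).1 hsat⟩)
    -- glue the two worlds
    set P1 := vpos φ ∩ P with hP1
    set Q1 := vneg φ ∩ Q with hQ1
    set P3 := vpos ψ \ P2 with hP3
    set Q3 := vneg ψ \ Q2 with hQ3
    have d13 : Disjoint P1 P3 := by
      rw [Finset.disjoint_left]
      intro a ha hb
      have h1 : a ∈ P := (Finset.mem_inter.1 ha).2
      have h2 : a ∈ vpos ψ := (Finset.mem_sdiff.1 hb).1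
      have : a ∈ vpos ψ ∩ P := Finset.mem_inter.2 ⟨h2, h1⟩
      rw [hψp] at this
      exact absurd this (Finset.notMem_empty a)
    have d23 : Disjoint P2 P3 := by
      rw [Finset.disjoint_left]
      intro a ha hb
      exact (Finset.mem_sdiff.1 hb).2 ha
    have dq13 : Disjoint Q1 Q3 := by
      rw [Finset.disjoint_left]
      intro a ha hb
      have h1 : a ∈ Q := (Finset.mem_inter.1 ha).2
      have h2 : a ∈ vneg ψ := (Finset.mem_sdiff.1 hb).1
      have : a ∈ vneg ψ ∩ Q := Finset.mem_inter.2 ⟨h2, h1⟩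
      rw [hψq] at this
      exact absurd this (Finset.notMem_empty a)
    have dq23 : Disjoint Q2 Q3 := by
      rw [Finset.disjoint_left]
      intro a ha hb
      exact (Finset.mem_sdiff.1 hb).2 ha
    have hposφ : vpos φ ⊆ P1 ∪ P2 := by
      intro a ha
      by_cases hP : a ∈ P
      · exact Finset.mem_union.2 (Or.inl (Finset.mem_inter.2 ⟨ha, hP⟩))
      · exact Finset.mem_union.2 (Or.inr (Finset.mem_sdiff.2 ⟨ha, hP⟩))
    have hnegφ : vneg φ ⊆ Q1 ∪ Q2 := by
      intro a ha
      by_cases hQ : a ∈ Q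
      · exact Finset.mem_union.2 (Or.inl (Finset.mem_inter.2 ⟨ha, hQ⟩))
      · exact Finset.mem_union.2 (Or.inr (Finset.mem_sdiff.2 ⟨ha, hQ⟩))
    have hposψ : vpos ψ ⊆ P2 ∪ P3 := by
      intro a ha
      by_cases hP : a ∈ P2
      · exact Finset.mem_union.2 (Or.inl hP)
      · exact Finset.mem_union.2 (Or.inr (Finset.mem_sdiff.2 ⟨ha, hP⟩))
    have hnegψ : vneg ψ ⊆ Q2 ∪ Q3 := by
      intro a ha
      by_cases hQ : a ∈ Q2
      · exact Finset.mem_union.2 (Or.inl hQ)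
      · exact Finset.mem_union.2 (Or.inr (Finset.mem_sdiff.2 ⟨ha, hQ⟩))
    have hGsymm : Symm (glue canM canM P1 P2 Q2 Q3) := glue_symm canM_symm canM_symm
    have hsatφ : (glue canM canM P1 P2 Q2 Q3).Sat φ (Sum.inl (w, n, w')) :=
      ((Apres (P1 := P1) (Q1 := Q1) (Q3 := Q3) dq13 dq23 φ n w w' hZ le_rfl).1)
        hposφ hnegφ hφw
    have hsatψ : (glue canM canM P1 P2 Q2 Q3).Sat ψ (Sum.inl (w, n, w')) :=
      sound hprov (glue canM canM P1 P2 Q2 Q3) hGsymm (Sum.inl (w, n, w')) hsatφ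
    have : canM.Sat ψ w' :=
      ((Bpres (P3 := P3) canM_symm d13 d23 ψ).1) hposψ hnegψ
        (Sum.inl (w, n, w')) w' ⟨rfl, hZ⟩ hsatψ
    exact hψw' this
  · exact depth_conjList_le fun ρ hρ => (fam_bounds (List.mem_of_mem_filter hρ)).2

end ULKBdev6

/-- KB enjoys ULIP, with interpolants of depth at most d(φ). -/
theorem ulip_KB : ULIP TheoryKB ∧
    ∀ (φ : Formula) (P Q : Finset ℕ), ∃ θ : Formula,
      IsULInterpolant TheoryKB φ P Q θ ∧ θ.depth ≤ φ.depth := by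
  have main : ∀ (φ : Formula) (P Q : Finset ℕ), ∃ θ : Formula,
      IsULInterpolant TheoryKB φ P Q θ ∧ θ.depth ≤ φ.depth := by
    intro φ P Q
    obtain ⟨θ, ⟨h1, h2, h3, h4⟩, h5⟩ := main_interp φ P Q
    refine ⟨θ, ⟨h1, h2, prov_mem_KB h3, ?_⟩, h5⟩
    intro ψ hp hq hmem
    rw [KB_eq_prov] at hmem
    exact prov_mem_KB (h4 ψ hp hq hmem)
  exact ⟨fun φ P Q => ⟨(main φ P Q).choose, (main φ P Q).choose_spec.1⟩, main⟩
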